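/- Fix α > 1/2 and ν > 0, set R_n = 2·log(n/ν) and ρ_n(r) = α·sinh(α r)/(cosh(α R_n) − 1)·1_{0 ≤ r < R_n}. Then for every continuous non-negative function φ on ℝ with compact support, n·∫₀^∞ φ(r − (1 − 1/(2α))·R_n)·ρ_n(r) dr converges as n → ∞ to ∫_{−∞}^{∞} φ(u)·α·ν·e^{α u} du. -/

import Mathlib

open Real Filter MeasureTheory

/-- Radius of the random hyperbolic graph: `R_n = 2 log(n/ν)`. -/
noncomputable def Rn (ν : ℝ) (n : ℕ) : ℝ := 2 * Real.log (n / ν)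

/-- Radial density of the random hyperbolic graph:
`ρ_n(r) = α sinh(αr)/(cosh(αR_n) − 1)` for `0 ≤ r < R_n` and `0` otherwise. -/
noncomputable def rhon (α ν : ℝ) (n : ℕ) (r : ℝ) : ℝ :=
  if r < Rn ν n then α * Real.sinh (α * r) / (Real.cosh (α * Rn ν n) - 1) else 0

lemma aux_integrable (φ : ℝ → ℝ) (hc : Continuous φ) (hsupp : HasCompactSupport φ) (β : ℝ) :
    Integrable (fun u => φ u * Real.exp (β * u)) :=
  (hc.mul (Real.continuous_exp.comp (continuous_const.mul continuous_id))).integrable_of_hasCompactSupport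
    hsupp.mul_right

-- limit lemmas as functions of x
lemma denomlim (α : ℝ) (hα : 1/2 < α) :
    Tendsto (fun x : ℝ => 1 + Real.exp (-(4*α)*x) - 2 * Real.exp (-(2*α)*x)) atTop (nhds 1) := by
  have h1 : Tendsto (fun x : ℝ => Real.exp (-(4*α)*x)) atTop (nhds 0) :=
    Real.tendsto_exp_atBot.comp ((tendsto_const_mul_atBot_of_neg (by linarith)).mpr tendsto_id)
  have h2 : Tendsto (fun x : ℝ => Real.exp (-(2*α)*x)) atTop (nhds 0) :=
    Real.tendsto_exp_atBot.comp ((tendsto_const_mul_atBot_of_neg (by linarith)).mpr tendsto_id)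
  have h := ((tendsto_const_nhds (x := (1:ℝ))).add h1).sub (h2.const_mul 2)
  simpa using h

lemma Alim (α ν : ℝ) (hα : 1/2 < α) (hν : 0 < ν) :
    Tendsto (fun x : ℝ => ν * Real.exp x * α * Real.exp ((2*α-1)*x) /
      (Real.exp (2*α*x) + Real.exp (-(2*α*x)) - 2)) atTop (nhds (ν*α)) := by
  have hα0 : 0 < α := by linarith
  have key : ∀ x : ℝ, 0 < x →
      ν * Real.exp x * α * Real.exp ((2*α-1)*x) / (Real.exp (2*α*x) + Real.exp (-(2*α*x)) - 2)
      = ν * α / (1 + Real.exp (-(4*α)*x) - 2 * Real.exp (-(2*α)*x)) := by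
    intro x hx
    set d1 : ℝ := Real.exp (2*α*x) + Real.exp (-(2*α*x)) - 2 with hd1def
    have hd1 : 0 < d1 := by
      have h1 : d1 = 2 * (Real.cosh (2*α*x) - 1) := by rw [Real.cosh_eq]; ring
      have h2 : (1:ℝ) < Real.cosh (2*α*x) := Real.one_lt_cosh.mpr (by positivity)
      rw [h1]; linarith
    have hd2eq : 1 + Real.exp (-(4*α)*x) - 2 * Real.exp (-(2*α)*x)
        = Real.exp (-(2*α)*x) * d1 := by
      rw [hd1def, mul_sub, mul_add, ← Real.exp_add, ← Real.exp_add,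
        show -(2*α)*x + 2*α*x = 0 by ring, show -(2*α)*x + -(2*α*x) = -(4*α)*x by ring,
        Real.exp_zero]
      ring
    rw [hd2eq, div_eq_div_iff hd1.ne' (by positivity)]
    have h3 : Real.exp x * Real.exp ((2*α-1)*x) * Real.exp (-(2*α)*x) = 1 := by
      rw [← Real.exp_add, ← Real.exp_add, show x + (2*α-1)*x + -(2*α)*x = 0 by ring,
        Real.exp_zero]
    linear_combination (ν * α * d1) * h3
  have hT : Tendsto (fun x : ℝ => ν * α / (1 + Real.exp (-(4*α)*x) - 2 * Real.exp (-(2*α)*x)))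
      atTop (nhds (ν*α)) := by
    have := Tendsto.div (tendsto_const_nhds (x := ν*α)) (denomlim α hα) one_ne_zero
    simpa [Pi.div_def] using this
  exact hT.congr' (by filter_upwards [eventually_gt_atTop 0] with x hx using (key x hx).symm)

lemma Blim (α ν : ℝ) (hα : 1/2 < α) (hν : 0 < ν) :
    Tendsto (fun x : ℝ => ν * Real.exp x * α * Real.exp (-((2*α-1)*x)) /
      (Real.exp (2*α*x) + Real.exp (-(2*α*x)) - 2)) atTop (nhds 0) := by
  have hα0 : 0 < α := by linarith
  have key : ∀ x : ℝ, 0 < x →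
      ν * Real.exp x * α * Real.exp (-((2*α-1)*x)) / (Real.exp (2*α*x) + Real.exp (-(2*α*x)) - 2)
      = ν * α * Real.exp ((2-4*α)*x) / (1 + Real.exp (-(4*α)*x) - 2 * Real.exp (-(2*α)*x)) := by
    intro x hx
    set d1 : ℝ := Real.exp (2*α*x) + Real.exp (-(2*α*x)) - 2 with hd1def
    have hd1 : 0 < d1 := by
      have h1 : d1 = 2 * (Real.cosh (2*α*x) - 1) := by rw [Real.cosh_eq]; ring
      have h2 : (1:ℝ) < Real.cosh (2*α*x) := Real.one_lt_cosh.mpr (by positivity)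
      rw [h1]; linarith
    have hd2eq : 1 + Real.exp (-(4*α)*x) - 2 * Real.exp (-(2*α)*x)
        = Real.exp (-(2*α)*x) * d1 := by
      rw [hd1def, mul_sub, mul_add, ← Real.exp_add, ← Real.exp_add,
        show -(2*α)*x + 2*α*x = 0 by ring, show -(2*α)*x + -(2*α*x) = -(4*α)*x by ring,
        Real.exp_zero]
      ring
    rw [hd2eq, div_eq_div_iff hd1.ne' (by positivity)]
    have h3 : Real.exp x * Real.exp (-((2*α-1)*x)) * Real.exp (-(2*α)*x)
        = Real.exp ((2-4*α)*x) := by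
      rw [← Real.exp_add, ← Real.exp_add, show x + -((2*α-1)*x) + -(2*α)*x = (2-4*α)*x by ring]
    linear_combination (ν * α * d1) * h3
  have hnum : Tendsto (fun x : ℝ => ν * α * Real.exp ((2-4*α)*x)) atTop (nhds 0) := by
    have h := Real.tendsto_exp_atBot.comp
      ((tendsto_const_mul_atBot_of_neg (by linarith : (2-4*α) < 0)).mpr
        (tendsto_id (α := ℝ) (x := atTop)))
    have := h.const_mul (ν*α)
    simpa [Function.comp] using this
  have hT : Tendsto (fun x : ℝ => ν * α * Real.exp ((2-4*α)*x) /
      (1 + Real.exp (-(4*α)*x) - 2 * Real.exp (-(2*α)*x))) atTop (nhds 0) := by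
    have := Tendsto.div hnum (denomlim α hα) one_ne_zero
    simpa [Pi.div_def] using this
  exact hT.congr' (by filter_upwards [eventually_gt_atTop 0] with x hx using (key x hx).symm)

/-- Intensity convergence in the regime `α > 1/2`. -/
theorem stmt_14 (α ν : ℝ) (hα : 1 / 2 < α) (hν : 0 < ν)
    (φ : ℝ → ℝ) (hc : Continuous φ) (hsupp : HasCompactSupport φ) (hpos : 0 ≤ φ) :
    Tendsto (fun n : ℕ =>
        (n : ℝ) * ∫ r in Set.Ioi (0:ℝ), φ (r - (1 - 1 / (2 * α)) * Rn ν n) * rhon α ν n r)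
      atTop
      (nhds (∫ u : ℝ, φ u * (α * ν * Real.exp (α * u)))) := by
  have hα0 : 0 < α := by linarith
  have h2α : 0 < 2 * α - 1 := by linarith
  -- support bound
  obtain ⟨M, hM0, hM⟩ : ∃ M : ℝ, 0 < M ∧ ∀ u : ℝ, M < |u| → φ u = 0 := by
    obtain ⟨r, hr⟩ := hsupp.isBounded.subset_closedBall 0
    refine ⟨max r 1, lt_of_lt_of_le one_pos (le_max_right _ _), fun u hu => ?_⟩
    apply image_eq_zero_of_notMem_tsupport
    intro hmem
    have := hr hmem
    simp only [Metric.mem_closedBall, Real.dist_eq, sub_zero] at this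
    have : |u| ≤ max r 1 := le_trans this (le_max_left _ _)
    linarith
  set I₁ := ∫ u : ℝ, φ u * Real.exp (α * u) with hI₁
  set I₂ := ∫ u : ℝ, φ u * Real.exp (-α * u) with hI₂
  have hint1 := aux_integrable φ hc hsupp α
  have hint2 := aux_integrable φ hc hsupp (-α)
  have hRHS : (∫ u : ℝ, φ u * (α * ν * Real.exp (α * u))) = ν * α * I₁ := by
    rw [hI₁, ← integral_const_mul]
    congr 1; funext u; ring
  set c : ℝ := 1 - 1 / (2 * α) with hcdef
  have hc0 : 0 < c := by
    rw [hcdef]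
    have : 1 / (2 * α) < 1 := by
      rw [div_lt_one (by linarith)]; linarith
    linarith
  set x : ℕ → ℝ := fun n => Real.log (n / ν) with hxdef
  have hRx : ∀ n, Rn ν n = 2 * x n := fun n => rfl
  have hx : Tendsto x atTop atTop :=
    Real.tendsto_log_atTop.comp
      ((tendsto_div_const_atTop_of_pos hν).mpr tendsto_natCast_atTop_atTop)
  -- key exponent identities
  have e1 : ∀ n, α * (c * Rn ν n) = (2*α-1) * x n := by
    intro n
    rw [hcdef, hRx]
    field_simp
  have e2 : ∀ n, α * Rn ν n = 2*α*(x n) := by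
    intro n; rw [hRx]; ring
  have e3 : ∀ n, 2 * (Real.cosh (α * Rn ν n) - 1)
      = Real.exp (2*α*x n) + Real.exp (-(2*α*x n)) - 2 := by
    intro n; rw [e2, Real.cosh_eq]; ring
  -- n = ν * exp (x n) for n ≥ 1
  have hnν : ∀ n : ℕ, 1 ≤ n → (n:ℝ) = ν * Real.exp (x n) := by
    intro n hn
    have hn0 : (0:ℝ) < n := by exact_mod_cast hn
    rw [hxdef]
    rw [Real.exp_log (by positivity)]
    field_simp
  -- limits of coefficients
  have hA : Tendsto (fun n : ℕ => (n:ℝ) * (α * Real.exp (α*(c*Rn ν n)) /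
      (2*(Real.cosh (α * Rn ν n) - 1)))) atTop (nhds (ν*α)) := by
    refine ((Alim α ν hα hν).comp hx).congr' ?_
    filter_upwards [eventually_ge_atTop 1] with n hn
    simp only [Function.comp]
    rw [e1, e3, hnν n hn]
    ring
  have hB : Tendsto (fun n : ℕ => (n:ℝ) * (α * Real.exp (-(α*(c*Rn ν n))) /
      (2*(Real.cosh (α * Rn ν n) - 1)))) atTop (nhds 0) := by
    refine ((Blim α ν hα hν).comp hx).congr' ?_
    filter_upwards [eventually_ge_atTop 1] with n hn
    simp only [Function.comp]
    rw [e1, e3, hnν n hn]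
    ring
  have hfinal : Tendsto (fun n : ℕ =>
      ((n:ℝ) * (α * Real.exp (α*(c*Rn ν n)) / (2*(Real.cosh (α * Rn ν n) - 1)))) * I₁
      - ((n:ℝ) * (α * Real.exp (-(α*(c*Rn ν n))) / (2*(Real.cosh (α * Rn ν n) - 1)))) * I₂)
      atTop (nhds (ν*α*I₁)) := by
    have h := (hA.mul_const I₁).sub (hB.mul_const I₂)
    simpa using h
  rw [hRHS]
  refine hfinal.congr' ?_
  -- eventual equality
  filter_upwards [hx.eventually_gt_atTop 0, hx.eventually_gt_atTop (α*M/(2*α-1)),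
    hx.eventually_gt_atTop (α*M), eventually_ge_atTop 1] with n hx0 hx1 hx2 hn1
  set R : ℝ := Rn ν n with hRdef
  have hR0 : 0 < R := by rw [hRdef, hRx]; linarith
  have hD : 0 < Real.cosh (α * R) - 1 := by
    have := Real.one_lt_cosh.mpr (by positivity : α * R ≠ 0)
    linarith
  have hcR : M < c * R := by
    have h1 : α * M < x n * (2*α-1) := (div_lt_iff₀ h2α).mp hx1
    have h2 : α * (c * R) = (2*α-1) * x n := e1 n
    nlinarith
  have hRc : M < R - c * R := by
    have h1 : R - c * R = x n / α := by
      rw [hRdef, hRx, hcdef]; field_simp; ring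
    rw [h1]
    rw [lt_div_iff₀ hα0]
    nlinarith [hx2]
  set D : ℝ := Real.cosh (α * R) - 1 with hDdef
  -- step 1: replace rhon by the smooth formula on Ioi 0
  have step1 : ∫ r in Set.Ioi (0:ℝ), φ (r - c * R) * rhon α ν n r
      = ∫ r in Set.Ioi (0:ℝ), φ (r - c * R) * (α * Real.sinh (α * r) / D) := by
    refine setIntegral_congr_fun measurableSet_Ioi (fun r hr => ?_)
    by_cases h : r < R
    · simp only [rhon, if_pos (show r < Rn ν n from h), hDdef, hRdef]
    · have hφ : φ (r - c * R) = 0 := by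
        apply hM
        have : R - c * R ≤ r - c * R := by linarith [not_lt.mp h]
        calc M < R - c * R := hRc
          _ ≤ r - c * R := this
          _ ≤ |r - c * R| := le_abs_self _
      simp only [rhon, if_neg (show ¬ r < Rn ν n from h), hφ, zero_mul, mul_zero]
  -- step 2: extend to all of ℝ
  have step2 : ∫ r in Set.Ioi (0:ℝ), φ (r - c * R) * (α * Real.sinh (α * r) / D)
      = ∫ r : ℝ, φ (r - c * R) * (α * Real.sinh (α * r) / D) := by
    apply setIntegral_eq_integral_of_forall_compl_eq_zero
    intro r hr
    have hr0 : r ≤ 0 := by simpa using hr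
    have hφ : φ (r - c * R) = 0 := by
      apply hM
      have : c * R - r ≤ |r - c * R| := by
        rw [abs_sub_comm]; exact le_abs_self _
      linarith [hcR]
    rw [hφ, zero_mul]
  -- step 3: translate
  have step3 : ∫ r : ℝ, φ (r - c * R) * (α * Real.sinh (α * r) / D)
      = ∫ u : ℝ, φ u * (α * Real.sinh (α * (u + c * R)) / D) := by
    have h := integral_sub_right_eq_self (μ := volume)
      (fun u => φ u * (α * Real.sinh (α * (u + c * R)) / D)) (c * R)
    simp only [sub_add_cancel] at h
    exact h
  -- step 4: expand sinh and integrate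
  have hptwise : ∀ u : ℝ, φ u * (α * Real.sinh (α * (u + c * R)) / D)
      = (α * Real.exp (α*(c*R)) / (2*D)) * (φ u * Real.exp (α * u))
        - (α * Real.exp (-(α*(c*R))) / (2*D)) * (φ u * Real.exp (-α * u)) := by
    intro u
    rw [Real.sinh_eq, show α * (u + c * R) = α * u + α * (c * R) by ring, Real.exp_add,
      neg_add, Real.exp_add, show -(α*u) = -α * u by ring]
    field_simp
  have step4 : ∫ u : ℝ, φ u * (α * Real.sinh (α * (u + c * R)) / D)
      = (α * Real.exp (α*(c*R)) / (2*D)) * I₁ - (α * Real.exp (-(α*(c*R))) / (2*D)) * I₂ := by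
    simp only [hptwise]
    rw [integral_sub (hint1.const_mul _) (hint2.const_mul _), integral_const_mul,
      integral_const_mul, hI₁, hI₂]
  rw [step1, step2, step3, step4]
  ring
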